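/- Define the Airy coefficients α : ℕ → ℝ by α(0) = 1, α(1) = 0, α(2) = -1/2, and α(k) = -(α(k-3) + α(k-2))/(k(k-1)) for all k ≥ 3, and define ψ : ℝ × ℝ → ℂ by ψ(r,t) = e^{it}·∑_{k=0}^∞ α(k)·r^k. Then ψ satisfies ∂²ψ/∂r²(r,t) - ∂²ψ/∂t²(r,t) + r·ψ(r,t) = 0 for all (r,t) ∈ ℝ × ℝ, together with ψ(0,t) = e^{it} and ∂ψ/∂r(0,t) = 0 for all t ∈ ℝ. -/

import Mathlib

open Complex

set_option maxHeartbeats 1000000 in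
lemma airy_sq_bound (α : ℕ → ℝ) (hα0 : α 0 = 1) (hα1 : α 1 = 0) (hα2 : α 2 = -1/2)
    (hαrec : ∀ k : ℕ, 3 ≤ k → α k = -(α (k - 3) + α (k - 2)) / ((k : ℝ) * ((k : ℝ) - 1))) :
    ∀ k : ℕ, (α k) ^ 2 * (k.factorial : ℝ) ≤ 4 ^ k := by
  intro k
  induction k using Nat.strong_induction_on with
  | _ k ih =>
    match k, ih with
    | 0, _ => simp [hα0]
    | 1, _ => simp [hα1]
    | 2, _ => norm_num [hα2, Nat.factorial]
    | (m+3), ih =>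
      have h1 := ih m (by omega)
      have h2 := ih (m+1) (by omega)
      have hrec := hαrec (m+3) (by omega)
      have hsub1 : m + 3 - 3 = m := by omega
      have hsub2 : m + 3 - 2 = m + 1 := by omega
      rw [hsub1, hsub2] at hrec
      have hM : (0:ℝ) ≤ (m:ℝ) := Nat.cast_nonneg m
      have hD : (0:ℝ) < ((m:ℝ)+3) * ((m:ℝ)+2) := by nlinarith
      have hcast : ((m+3:ℕ):ℝ) * (((m+3:ℕ):ℝ) - 1) = ((m:ℝ)+3) * ((m:ℝ)+2) := by
        push_cast; ring
      rw [hcast] at hrec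
      have hfac : ((m+3).factorial : ℝ) = ((m:ℝ)+3) * (((m:ℝ)+2) * (((m:ℝ)+1) * (m.factorial : ℝ))) := by
        rw [Nat.factorial_succ, Nat.factorial_succ, Nat.factorial_succ]; push_cast; ring
      have hfacpos : (0:ℝ) < (m.factorial : ℝ) := by positivity
      have hfac1 : ((m+1).factorial : ℝ) = ((m:ℝ)+1) * (m.factorial : ℝ) := by
        rw [Nat.factorial_succ]; push_cast; ring
      rw [hfac1] at h2
      have h4 : (0:ℝ) < 4 ^ m := by positivity
      rw [hrec, hfac]
      have h2' : α (m+1) ^ 2 * (((m:ℝ)+1) * (m.factorial : ℝ)) ≤ 4 * 4 ^ m := by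
        calc α (m+1) ^ 2 * (((m:ℝ)+1) * (m.factorial : ℝ)) ≤ (4:ℝ)^(m+1) := h2
        _ = 4 * 4 ^ m := by ring
      have e1 : α m ^ 2 * (m.factorial : ℝ) * ((m:ℝ)+1) ≤ 4 ^ m * ((m:ℝ)+1) :=
        mul_le_mul_of_nonneg_right h1 (by linarith)
      have e2 : (0:ℝ) ≤ (α m - α (m+1))^2 * (((m:ℝ)+1) * (m.factorial : ℝ)) := by positivity
      have key : (α m + α (m+1)) ^ 2 * (((m:ℝ)+1) * (m.factorial : ℝ)) ≤ (2*((m:ℝ)+1) + 8) * 4 ^ m := by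
        nlinarith [e1, e2, h2']
      have h4e : (4:ℝ) ^ (m+3) = 64 * 4 ^ m := by ring
      rw [div_pow, h4e]
      rw [div_mul_eq_mul_div, div_le_iff₀ (by positivity)]
      have : (-(α m + α (m+1))) ^ 2 = (α m + α (m+1)) ^ 2 := by ring
      rw [this]
      have e3 := mul_le_mul_of_nonneg_right key hD.le
      have e5 : (0:ℝ) < 64*(((m:ℝ)+3)*((m:ℝ)+2)) - (2*((m:ℝ)+1)+8) := by nlinarith
      have e4 : (2*((m:ℝ)+1)+8) * 4^m * (((m:ℝ)+3)*((m:ℝ)+2)) ≤ 64 * 4^m * (((m:ℝ)+3)*((m:ℝ)+2))^2 := by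
        nlinarith [mul_nonneg (mul_pos h4 hD).le e5.le]
      linarith [e3, e4]

lemma summable_poly4 (x : ℝ) (hx : 0 ≤ x) :
    Summable (fun k : ℕ => ((k:ℝ)+2)^4 * x^k / (k.factorial : ℝ)) := by
  rw [← summable_nat_add_iff 4]
  have hbase := (Real.summable_pow_div_factorial x).mul_left (1296 * x^4)
  refine hbase.of_nonneg_of_le (fun n => by positivity) (fun n => ?_)
  have hn : (0:ℝ) ≤ (n:ℝ) := Nat.cast_nonneg n
  have hfac : ((n+4).factorial : ℝ)
      = ((n:ℝ)+4) * (((n:ℝ)+3) * (((n:ℝ)+2) * (((n:ℝ)+1) * (n.factorial : ℝ)))) := by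
    rw [Nat.factorial_succ, Nat.factorial_succ, Nat.factorial_succ, Nat.factorial_succ]
    push_cast; ring
  have hfacpos : (0:ℝ) < (n.factorial : ℝ) := by positivity
  have hP : (((n:ℕ)+4:ℕ):ℝ) + 2 = (n:ℝ) + 6 := by push_cast; ring
  rw [hfac]
  push_cast
  rw [div_le_iff₀ (by positivity)]
  have hpow : x ^ (n+4) = x^4 * x^n := by ring
  rw [hpow]
  have key : ((n:ℝ)+6)^4 ≤ 1296 * (((n:ℝ)+4) * (((n:ℝ)+3) * (((n:ℝ)+2) * ((n:ℝ)+1)))) := by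
    nlinarith [sq_nonneg ((n:ℝ)), pow_nonneg hn 3, pow_nonneg hn 4, hn]
  have h6 : ((n:ℝ)+4+2) = (n:ℝ)+6 := by ring
  rw [h6]
  have hr : (1296 * x^4 * (x^n/(n.factorial:ℝ))) * (((n:ℝ)+4) * (((n:ℝ)+3) * (((n:ℝ)+2) * (((n:ℝ)+1) * (n.factorial:ℝ))))) = (1296 * (((n:ℝ)+4) * (((n:ℝ)+3) * (((n:ℝ)+2) * ((n:ℝ)+1))))) * (x^4*x^n) := by
    field_simp
  rw [hr]
  exact mul_le_mul_of_nonneg_right key (by positivity)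

lemma airy_master (α : ℕ → ℝ)
    (hb : ∀ k : ℕ, (α k) ^ 2 * (k.factorial : ℝ) ≤ 4 ^ k)
    (R : ℝ) (hR : 0 ≤ R) :
    Summable (fun k : ℕ => ((k:ℝ)+2)^2 * |α k| * R^k) := by
  have hsum : Summable (fun k : ℕ => ((1/4:ℝ)^k + ((k:ℝ)+2)^4 * (16*R^2)^k / (k.factorial:ℝ))/2) :=
    ((summable_geometric_of_lt_one (by norm_num) (by norm_num)).add
      (summable_poly4 (16*R^2) (by positivity))).div_const 2
  refine hsum.of_nonneg_of_le (fun k => by positivity) (fun k => ?_)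
  set s := Real.sqrt (k.factorial : ℝ) with hs_def
  have hspos : 0 < s := Real.sqrt_pos.mpr (by positivity)
  have hs2 : s^2 = (k.factorial : ℝ) := Real.sq_sqrt (by positivity)
  have h4pos : (0:ℝ) < 4^k := by positivity
  set x := |α k| * s / 4^k with hx_def
  set y := ((k:ℝ)+2)^2 * R^k * 4^k / s with hy_def
  have hxy : x * y = ((k:ℝ)+2)^2 * |α k| * R^k := by
    rw [hx_def, hy_def]; field_simp
  have hx2 : x^2 ≤ (1/4:ℝ)^k := by
    rw [hx_def, div_pow, mul_pow, _root_.sq_abs, hs2]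
    rw [div_le_iff₀ (by positivity)]
    have h416 : ((1:ℝ)/4)^k * (4^k)^2 = 4^k := by
      rw [div_pow, one_pow, ← pow_mul, div_mul_eq_mul_div, one_mul,
        div_eq_iff (show (4:ℝ)^k ≠ 0 by positivity), ← pow_add]
      congr 1; omega
    rw [h416]; exact hb k
  have hy2 : y^2 = ((k:ℝ)+2)^4 * (16*R^2)^k / (k.factorial:ℝ) := by
    rw [hy_def, div_pow, mul_pow, mul_pow, hs2, mul_pow]
    rw [← pow_mul, ← pow_mul]
    congr 1
    rw [show (16:ℝ) = 4^2 by norm_num, ← pow_mul, ← pow_mul]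
    ring_nf
  calc ((k:ℝ)+2)^2 * |α k| * R^k = x * y := hxy.symm
    _ ≤ (x^2 + y^2)/2 := by nlinarith [sq_nonneg (x - y)]
    _ ≤ ((1/4:ℝ)^k + ((k:ℝ)+2)^4 * (16*R^2)^k / (k.factorial:ℝ))/2 := by
        rw [hy2]; linarith [hx2]

set_option maxHeartbeats 4000000 in
theorem airy_solution_klein_gordon
    (α : ℕ → ℝ) (hα0 : α 0 = 1) (hα1 : α 1 = 0) (hα2 : α 2 = -1/2)
    (hαrec : ∀ k : ℕ, 3 ≤ k → α k = -(α (k - 3) + α (k - 2)) / ((k : ℝ) * ((k : ℝ) - 1)))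
    (ψ : ℝ × ℝ → ℂ)
    (hψ : ∀ r t : ℝ, ψ (r, t) = Complex.exp (Complex.I * t) * ((∑' k : ℕ, α k * r ^ k : ℝ) : ℂ)) :
    (∀ r t : ℝ,
      deriv (deriv (fun r' : ℝ => ψ (r', t))) r
        - deriv (deriv (fun t' : ℝ => ψ (r, t'))) t
        + (r : ℂ) * ψ (r, t) = 0) ∧
    (∀ t : ℝ, ψ (0, t) = Complex.exp (Complex.I * t)) ∧
    (∀ t : ℝ, deriv (fun r' : ℝ => ψ (r', t)) 0 = 0) := by
  have hb := airy_sq_bound α hα0 hα1 hα2 hαrec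
  set f : ℝ → ℝ := fun y => ∑' k : ℕ, α k * y ^ k with hf_def
  set g : ℝ → ℝ := fun y => ∑' n : ℕ, α n * ((n:ℝ) * y ^ (n-1)) with hg_def
  set h2 : ℝ → ℝ := fun y => ∑' n : ℕ, (α n * (n:ℝ)) * (((n-1:ℕ):ℝ) * y ^ (n-1-1)) with hh2_def
  -- basic ball facts
  have hRpos : ∀ y : ℝ, (0:ℝ) < |y| + 1 := fun y => by positivity
  have hR1 : ∀ y : ℝ, (1:ℝ) ≤ |y| + 1 := fun y => by linarith [abs_nonneg y]
  -- first derivative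
  have hd1 : ∀ y : ℝ, HasDerivAt f (g y) y := by
    intro y
    set R := |y| + 1 with hR_def
    refine hasDerivAt_tsum_of_isPreconnected
      (u := fun n : ℕ => ((n:ℝ)+2)^2 * |α n| * R^n)
      (airy_master α hb R (hRpos y).le) Metric.isOpen_ball
      ((convex_ball (0:ℝ) R).isPreconnected)
      (g := fun n w => α n * w ^ n)
      (g' := fun n z => α n * ((n:ℝ) * z ^ (n-1)))
      (fun n z _ => ((hasDerivAt_pow n z).const_mul (α n)))
      (fun n z hz => ?_) (y₀ := 0) ?_ ?_ ?_
    · have hzR : |z| ≤ R := by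
        rw [Metric.mem_ball, Real.dist_eq, sub_zero] at hz; linarith
      have h1 : |z| ^ (n-1) ≤ R ^ n := by
        calc |z| ^ (n-1) ≤ R ^ (n-1) := pow_le_pow_left₀ (abs_nonneg z) hzR _
          _ ≤ R ^ n := pow_le_pow_right₀ (hR1 y) (by omega)
      have h2 : (n:ℝ) ≤ ((n:ℝ)+2)^2 := by nlinarith [Nat.cast_nonneg (α := ℝ) n]
      have h3 : (0:ℝ) ≤ (n:ℝ) := Nat.cast_nonneg n
      calc ‖α n * ((n:ℝ) * z ^ (n-1))‖ = |α n| * ((n:ℝ) * |z| ^ (n-1)) := by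
            rw [Real.norm_eq_abs, abs_mul, abs_mul, Nat.abs_cast, _root_.abs_pow]
        _ ≤ |α n| * (((n:ℝ)+2)^2 * R^n) := by
            apply mul_le_mul_of_nonneg_left _ (abs_nonneg _)
            calc (n:ℝ) * |z| ^ (n-1) ≤ (n:ℝ) * R^n :=
                  mul_le_mul_of_nonneg_left h1 h3
              _ ≤ ((n:ℝ)+2)^2 * R^n := by
                  apply mul_le_mul_of_nonneg_right h2 (by positivity)
        _ = ((n:ℝ)+2)^2 * |α n| * R^n := by ring
    · exact Metric.mem_ball_self (hRpos y)
    · apply summable_of_ne_finset_zero (s := {0})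
      intro n hn
      simp only [Finset.mem_singleton] at hn
      simp [zero_pow hn]
    · rw [Metric.mem_ball, Real.dist_eq, sub_zero]; linarith [abs_nonneg y]
  -- second derivative
  have hd2 : ∀ y : ℝ, HasDerivAt g (h2 y) y := by
    intro y
    set R := |y| + 1 with hR_def
    refine hasDerivAt_tsum_of_isPreconnected
      (u := fun n : ℕ => ((n:ℝ)+2)^2 * |α n| * R^n)
      (airy_master α hb R (hRpos y).le) Metric.isOpen_ball
      ((convex_ball (0:ℝ) R).isPreconnected)
      (g := fun n w => α n * ((n:ℝ) * w ^ (n-1)))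
      (g' := fun n z => (α n * (n:ℝ)) * (((n-1:ℕ):ℝ) * z ^ (n-1-1)))
      (fun n z _ => ?_) (fun n z hz => ?_) (y₀ := 0) ?_ ?_ ?_
    · have := (hasDerivAt_pow (n-1) z).const_mul (α n * (n:ℝ))
      exact this.congr_of_eventuallyEq (Filter.Eventually.of_forall fun w => by
        show α n * ((n:ℝ) * w ^ (n-1)) = α n * (n:ℝ) * w ^ (n-1); ring)
    · have hzR : |z| ≤ R := by
        rw [Metric.mem_ball, Real.dist_eq, sub_zero] at hz; linarith
      have h1 : |z| ^ (n-1-1) ≤ R ^ n := by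
        calc |z| ^ (n-1-1) ≤ R ^ (n-1-1) := pow_le_pow_left₀ (abs_nonneg z) hzR _
          _ ≤ R ^ n := pow_le_pow_right₀ (hR1 y) (by omega)
      have hcast : ((n-1:ℕ):ℝ) ≤ (n:ℝ) := Nat.cast_le.mpr (by omega)
      have h3 : (0:ℝ) ≤ (n:ℝ) := Nat.cast_nonneg n
      have h3' : (0:ℝ) ≤ ((n-1:ℕ):ℝ) := Nat.cast_nonneg _
      have h2' : (n:ℝ) * ((n-1:ℕ):ℝ) ≤ ((n:ℝ)+2)^2 := by nlinarith
      calc ‖(α n * (n:ℝ)) * (((n-1:ℕ):ℝ) * z ^ (n-1-1))‖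
          = |α n| * ((n:ℝ) * (((n-1:ℕ):ℝ) * |z| ^ (n-1-1))) := by
            rw [Real.norm_eq_abs, abs_mul, abs_mul, abs_mul, Nat.abs_cast, Nat.abs_cast, _root_.abs_pow]
            ring
        _ ≤ |α n| * (((n:ℝ)+2)^2 * R^n) := by
            apply mul_le_mul_of_nonneg_left _ (abs_nonneg _)
            calc (n:ℝ) * (((n-1:ℕ):ℝ) * |z| ^ (n-1-1))
                ≤ (n:ℝ) * (((n-1:ℕ):ℝ) * R ^ n) := by
                  apply mul_le_mul_of_nonneg_left _ h3
                  exact mul_le_mul_of_nonneg_left h1 h3'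
              _ = ((n:ℝ) * ((n-1:ℕ):ℝ)) * R ^ n := by ring
              _ ≤ ((n:ℝ)+2)^2 * R^n := mul_le_mul_of_nonneg_right h2' (by positivity)
        _ = ((n:ℝ)+2)^2 * |α n| * R^n := by ring
    · exact Metric.mem_ball_self (hRpos y)
    · apply summable_of_ne_finset_zero (s := {0, 1})
      intro n hn
      simp only [Finset.mem_insert, Finset.mem_singleton] at hn
      push_neg at hn
      have : (0:ℝ) ^ (n-1) = 0 := zero_pow (by omega)
      simp [this]
    · rw [Metric.mem_ball, Real.dist_eq, sub_zero]; linarith [abs_nonneg y]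
  -- summability at a given point r
  have hsumf : ∀ r : ℝ, Summable (fun k : ℕ => α k * r ^ k) := by
    intro r
    apply Summable.of_norm_bounded (airy_master α hb (|r|+1) (hRpos r).le)
    intro k
    have h1 : |r| ^ k ≤ (|r|+1) ^ k := pow_le_pow_left₀ (abs_nonneg r) (by linarith) _
    have h2 : (1:ℝ) ≤ ((k:ℝ)+2)^2 := by nlinarith [Nat.cast_nonneg (α := ℝ) k]
    calc ‖α k * r ^ k‖ = |α k| * |r| ^ k := by rw [Real.norm_eq_abs, abs_mul, _root_.abs_pow]
      _ ≤ |α k| * (|r|+1) ^ k := mul_le_mul_of_nonneg_left h1 (abs_nonneg _)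
      _ = 1 * (|α k| * (|r|+1)^k) := by ring
      _ ≤ ((k:ℝ)+2)^2 * (|α k| * (|r|+1)^k) := by
          apply mul_le_mul_of_nonneg_right h2 (by positivity)
      _ = ((k:ℝ)+2)^2 * |α k| * (|r|+1)^k := by ring
  have hsumh2 : ∀ r : ℝ, Summable (fun n : ℕ => (α n * (n:ℝ)) * (((n-1:ℕ):ℝ) * r ^ (n-1-1))) := by
    intro r
    apply Summable.of_norm_bounded (airy_master α hb (|r|+1) (hRpos r).le)
    intro n
    have hzR : |r| ≤ |r| + 1 := by linarith
    have h1 : |r| ^ (n-1-1) ≤ (|r|+1) ^ n := by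
      calc |r| ^ (n-1-1) ≤ (|r|+1) ^ (n-1-1) := pow_le_pow_left₀ (abs_nonneg r) hzR _
        _ ≤ (|r|+1) ^ n := pow_le_pow_right₀ (hR1 r) (by omega)
    have hcast : ((n-1:ℕ):ℝ) ≤ (n:ℝ) := Nat.cast_le.mpr (by omega)
    have h3 : (0:ℝ) ≤ (n:ℝ) := Nat.cast_nonneg n
    have h3' : (0:ℝ) ≤ ((n-1:ℕ):ℝ) := Nat.cast_nonneg _
    have h2' : (n:ℝ) * ((n-1:ℕ):ℝ) ≤ ((n:ℝ)+2)^2 := by nlinarith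
    calc ‖(α n * (n:ℝ)) * (((n-1:ℕ):ℝ) * r ^ (n-1-1))‖
        = |α n| * ((n:ℝ) * (((n-1:ℕ):ℝ) * |r| ^ (n-1-1))) := by
          rw [Real.norm_eq_abs, abs_mul, abs_mul, abs_mul, Nat.abs_cast, Nat.abs_cast, _root_.abs_pow]
          ring
      _ ≤ |α n| * (((n:ℝ)+2)^2 * (|r|+1)^n) := by
          apply mul_le_mul_of_nonneg_left _ (abs_nonneg _)
          calc (n:ℝ) * (((n-1:ℕ):ℝ) * |r| ^ (n-1-1))
              ≤ (n:ℝ) * (((n-1:ℕ):ℝ) * (|r|+1) ^ n) := by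
                apply mul_le_mul_of_nonneg_left _ h3
                exact mul_le_mul_of_nonneg_left h1 h3'
            _ = ((n:ℝ) * ((n-1:ℕ):ℝ)) * (|r|+1) ^ n := by ring
            _ ≤ ((n:ℝ)+2)^2 * (|r|+1)^n := mul_le_mul_of_nonneg_right h2' (by positivity)
      _ = ((n:ℝ)+2)^2 * |α n| * (|r|+1)^n := by ring
  -- the key ODE identity : h2 r + f r + r * f r = 0
  have hkey : ∀ n : ℕ, α (n+3) * (((n:ℝ)+3) * ((n:ℝ)+2)) = -(α n + α (n+1)) := by
    intro n
    have hrec := hαrec (n+3) (by omega)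
    have hsub1 : n + 3 - 3 = n := by omega
    have hsub2 : n + 3 - 2 = n + 1 := by omega
    rw [hsub1, hsub2] at hrec
    have hD : ((n+3:ℕ):ℝ) * (((n+3:ℕ):ℝ) - 1) = ((n:ℝ)+3) * ((n:ℝ)+2) := by push_cast; ring
    rw [hD] at hrec
    rw [hrec]
    field_simp
  have hODE : ∀ r : ℝ, h2 r + f r + r * f r = 0 := by
    intro r
    set F : ℕ → ℝ := fun n => α n * (n:ℝ) * (((n-1:ℕ):ℝ) * r ^ (n-1-1)) with hF_def
    have hs2 : Summable F := hsumh2 r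
    have hsf : Summable (fun k : ℕ => α k * r ^ k) := hsumf r
    have s1 : Summable (fun n : ℕ => F (n+1)) := (summable_nat_add_iff 1).mpr hs2
    have s2 : Summable (fun n : ℕ => F (n+1+1)) := (summable_nat_add_iff 1).mpr s1
    have hFval : ∀ n : ℕ, F (n+1+1+1) = -(α n + α (n+1)) * r^(n+1) := by
      intro n
      have h1 : (n+1+1+1 : ℕ) = n+3 := by omega
      rw [hF_def]
      simp only [h1]
      have h2 : (n+3-1 : ℕ) = n+2 := by omega
      have h3 : (n+3-1-1 : ℕ) = n+1 := by omega
      rw [h3, h2]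
      push_cast
      linear_combination (hkey n) * r^(n+1)
    have hF0 : F 0 = 0 := by rw [hF_def]; simp
    have hF1 : F (0+1) = 0 := by rw [hF_def]; simp [hα1]
    have hF2 : F (0+1+1) = -1 := by rw [hF_def]; norm_num [hα2]
    have e2 : h2 r = -1 + ∑' n : ℕ, (-(α n + α (n+1))) * r ^ (n+1) := by
      have t1 : h2 r = ∑' n : ℕ, F n := rfl
      rw [t1, Summable.tsum_eq_zero_add hs2, Summable.tsum_eq_zero_add s1, Summable.tsum_eq_zero_add s2,
        tsum_congr hFval, hF0, hF1, hF2]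
      ring
    have e3 : f r = 1 + ∑' n : ℕ, α (n+1) * r ^ (n+1) := by
      have t2 : f r = ∑' k : ℕ, α k * r ^ k := rfl
      rw [t2, Summable.tsum_eq_zero_add hsf]
      simp [hα0]
    have e4 : r * f r = ∑' n : ℕ, α n * r ^ (n+1) := by
      have t2 : f r = ∑' k : ℕ, α k * r ^ k := rfl
      rw [t2, ← tsum_mul_left]
      exact tsum_congr fun n => by ring
    have hsA : Summable (fun n : ℕ => (-(α n + α (n+1))) * r ^ (n+1)) :=
      ((summable_nat_add_iff 1).mpr s2).congr hFval
    have hsB : Summable (fun n : ℕ => α (n+1) * r ^ (n+1)) := (summable_nat_add_iff 1).mpr hsf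
    have hsC : Summable (fun n : ℕ => α n * r ^ (n+1)) :=
      (hsf.mul_left r).congr fun n => by ring
    rw [e2, e4, e3]
    have hz : ∑' n : ℕ, (-(α n + α (n+1))) * r ^ (n+1)
        + (∑' n : ℕ, α (n+1) * r ^ (n+1) + ∑' n : ℕ, α n * r ^ (n+1)) = 0 := by
      rw [← Summable.tsum_add hsB hsC, ← Summable.tsum_add hsA (hsB.add hsC)]
      convert tsum_zero with n
      ring
    linarith [hz]
  -- complex derivative facts
  refine ⟨?_, ?_, ?_⟩
  · intro r t
    set E := Complex.exp (Complex.I * t) with hE_def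
    have hψr : (fun r' : ℝ => ψ (r', t)) = fun r' => E * ((f r' : ℝ) : ℂ) :=
      funext fun r' => hψ r' t
    have hC1 : ∀ y : ℝ, HasDerivAt (fun r' : ℝ => ψ (r', t)) (E * ((g y : ℝ) : ℂ)) y := by
      intro y
      rw [hψr]
      exact ((hd1 y).ofReal_comp).const_mul E
    have hder1 : deriv (fun r' : ℝ => ψ (r', t)) = fun y => E * ((g y : ℝ) : ℂ) :=
      funext fun y => (hC1 y).deriv
    have hC2 : HasDerivAt (fun y : ℝ => E * ((g y : ℝ) : ℂ)) (E * ((h2 r : ℝ) : ℂ)) r :=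
      ((hd2 r).ofReal_comp).const_mul E
    have hrr : deriv (deriv (fun r' : ℝ => ψ (r', t))) r = E * ((h2 r : ℝ) : ℂ) := by
      rw [hder1]; exact hC2.deriv
    -- t derivatives
    set c : ℂ := ((f r : ℝ) : ℂ) with hc_def
    have hψt : (fun t' : ℝ => ψ (r, t')) = fun t' : ℝ => Complex.exp (Complex.I * t') * c :=
      funext fun t' => hψ r t'
    have hexp : ∀ s : ℝ, HasDerivAt (fun t' : ℝ => Complex.exp (Complex.I * t')) (Complex.exp (Complex.I * s) * Complex.I) s := by
      intro s
      have h0 : HasDerivAt (fun t' : ℝ => ((t' : ℝ) : ℂ)) 1 s := by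
        simpa using (hasDerivAt_id s).ofReal_comp
      have h1 : HasDerivAt (fun t' : ℝ => Complex.I * ((t' : ℝ) : ℂ)) Complex.I s := by
        simpa using h0.const_mul Complex.I
      exact h1.cexp
    have hT1 : ∀ s : ℝ, HasDerivAt (fun t' : ℝ => ψ (r, t')) (Complex.exp (Complex.I * s) * Complex.I * c) s := by
      intro s
      rw [hψt]
      exact (hexp s).mul_const c
    have hdert : deriv (fun t' : ℝ => ψ (r, t')) = fun s : ℝ => Complex.exp (Complex.I * s) * (Complex.I * c) := by
      funext s
      rw [(hT1 s).deriv]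
      ring
    have hT2 : HasDerivAt (fun s : ℝ => Complex.exp (Complex.I * s) * (Complex.I * c)) (Complex.exp (Complex.I * t) * Complex.I * (Complex.I * c)) t :=
      (hexp t).mul_const (Complex.I * c)
    have htt : deriv (deriv (fun t' : ℝ => ψ (r, t'))) t = Complex.exp (Complex.I * t) * Complex.I * (Complex.I * c) := by
      rw [hdert]; exact hT2.deriv
    rw [hrr, htt, hψ r t]
    have hcast : ((h2 r : ℝ) : ℂ) = -c - (r:ℂ) * c := by
      have := hODE r
      have h' : h2 r = -(f r) - r * (f r) := by linarith
      rw [hc_def, h']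
      push_cast
      ring
    rw [hcast, hE_def]
    have hI : Complex.I * Complex.I = -1 := Complex.I_mul_I
    rw [hc_def]
    linear_combination (-(Complex.exp (Complex.I * t) * ((f r : ℝ) : ℂ))) * hI
  · intro t
    rw [hψ 0 t]
    have hone : (∑' k : ℕ, α k * (0:ℝ) ^ k) = 1 := by
      rw [tsum_eq_single 0 (fun j hj => by simp [zero_pow hj])]
      simp [hα0]
    rw [hone]
    simp
  · intro t
    have hψr : (fun r' : ℝ => ψ (r', t)) = fun r' => Complex.exp (Complex.I * t) * ((f r' : ℝ) : ℂ) :=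
      funext fun r' => hψ r' t
    have hC1 : HasDerivAt (fun r' : ℝ => ψ (r', t)) (Complex.exp (Complex.I * t) * ((g 0 : ℝ) : ℂ)) 0 := by
      rw [hψr]
      exact ((hd1 0).ofReal_comp).const_mul _
    rw [hC1.deriv]
    have : g 0 = 0 := by
      show (∑' n : ℕ, α n * ((n:ℝ) * (0:ℝ) ^ (n-1))) = 0
      convert tsum_zero with n
      match n with
      | 0 => simp
      | 1 => simp [hα1]
      | (m+2) =>
        have : ((0:ℝ)) ^ (m+2-1) = 0 := zero_pow (by omega)
        simp [this]
    rw [this]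
    simp
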